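/- Let k ≥ 1 and let m, n, a₁, …, a_k be positive integers with a₁ ≤ a₂ ≤ … ≤ a_k and m/n = 1/a₁ + 1/a₂ + … + 1/a_k. Define the finite sequence (α_i)_{1 ≤ i ≤ k} by α₁ = k and α_i = (k − i + 1) · ∏_{j < i} α_j for 2 ≤ i ≤ k. Then a_i ≤ α_i · n^(2^(i−1)) for every 1 ≤ i ≤ k. -/

import Mathlib

open Finset

/-- The sequence `α` (0-indexed): `α 0 = k` and, for `i ≥ 1`,
`α i = (k - i) * ∏_{j < i} α j`, corresponding to the 1-indexed definition
`α₁ = k`, `α_i = (k - i + 1) * ∏_{j < i} α_j`. -/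
def alphaSeq (k : ℕ) : ℕ → ℕ
  | 0 => k
  | i + 1 => (k - (i + 1)) * ∏ j ∈ (Finset.range (i + 1)).attach, alphaSeq k j.1
  decreasing_by exact Finset.mem_range.mp j.2

theorem alphaSeq_succ (k i : ℕ) :
    alphaSeq k (i+1) = (k - (i+1)) * ∏ j ∈ Finset.range (i+1), alphaSeq k j := by
  rw [alphaSeq]
  congr 1
  exact Finset.prod_attach _ _

theorem two_pow_sum : ∀ t : ℕ, 1 + ∑ j ∈ Finset.range t, 2^j = 2^t
  | 0 => rfl
  | t+1 => by
      rw [Finset.sum_range_succ, pow_succ]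
      have := two_pow_sum t
      omega

theorem finprodlem {M : Type*} [CommMonoid M] (k c : ℕ) (hc : c ≤ k) (f : ℕ → M) :
    ∏ j ∈ univ.filter (fun j : Fin k => (j:ℕ) < c), f j.1 = ∏ j ∈ range c, f j := by
  refine Finset.prod_nbij (fun j => (j:ℕ)) ?_ ?_ ?_ ?_
  · intro a ha; simp at ha ⊢; exact ha
  · intro x hx y hy h; exact Fin.ext h
  · intro x hx; simp at hx ⊢; exact ⟨⟨x, lt_of_lt_of_le hx hc⟩, hx, rfl⟩
  · intro a ha; rfl


private theorem keylem (k : ℕ) (m n : ℕ) (hm : 0 < m) (hn : 0 < n)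
    (a : Fin k → ℕ) (ha : ∀ i, 0 < a i) (hmono : Monotone a)
    (heq : (m : ℚ) / n = ∑ i, (1 : ℚ) / a i) (i : Fin k) :
    (a i : ℚ) ≤ (k - (i:ℕ) : ℕ) * ((n : ℚ) * ∏ j ∈ univ.filter (fun j : Fin k => (j:ℕ) < (i:ℕ)), (a j : ℚ)) := by
  set s := univ.filter (fun j : Fin k => (j:ℕ) < (i:ℕ)) with hs
  set t := univ.filter (fun j : Fin k => ¬ (j:ℕ) < (i:ℕ)) with ht
  set T : ℚ := ∑ j ∈ t, (1 : ℚ) / a j with hT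
  set P : ℚ := (n : ℚ) * ∏ j ∈ s, (a j : ℚ) with hP
  have haQ : ∀ j : Fin k, (0:ℚ) < a j := fun j => by exact_mod_cast ha j
  have hPpos : 0 < P := by
    apply mul_pos (by exact_mod_cast hn)
    exact Finset.prod_pos (fun j _ => haQ j)
  -- T * P is an integer
  have hsplit : (m : ℚ)/n = (∑ j ∈ s, (1:ℚ)/a j) + T := by
    rw [heq, hT, hs, ht]; exact (Finset.sum_filter_add_sum_filter_not _ _ _).symm
  have hint : ∃ z : ℤ, T * P = (z : ℚ) := by
    have hT' : T = (m:ℚ)/n - ∑ j ∈ s, (1:ℚ)/a j := by linarith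
    refine ⟨(m * ∏ j ∈ s, (a j : ℤ)) - n * ∑ j ∈ s, ∏ j' ∈ s.erase j, (a j' : ℤ), ?_⟩
    rw [hT', hP, sub_mul, Finset.sum_mul]
    have h1 : (m:ℚ)/n * ((n:ℚ) * ∏ j ∈ s, (a j : ℚ)) = m * ∏ j ∈ s, (a j : ℚ) := by
      field_simp
    have h2 : ∀ j ∈ s, (1:ℚ)/a j * ((n:ℚ) * ∏ j' ∈ s, (a j' : ℚ))
        = n * ∏ j' ∈ s.erase j, (a j' : ℚ) := by
      intro j hj
      have hne : (a j : ℚ) ≠ 0 := ne_of_gt (haQ j)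
      rw [← Finset.mul_prod_erase s (fun j' => ((a j' : ℕ) : ℚ)) hj]
      field_simp
    rw [h1, Finset.sum_congr rfl h2]
    push_cast
    rw [Finset.mul_sum]
  -- T positive
  have hit : i ∈ t := by simp [ht]
  have hTpos : 0 < T := Finset.sum_pos (fun j _ => one_div_pos.mpr (haQ j)) ⟨i, hit⟩
  have hone : 1 ≤ T * P := by
    obtain ⟨z, hz⟩ := hint
    have : (0:ℚ) < z := hz ▸ mul_pos hTpos hPpos
    have : 1 ≤ z := by exact_mod_cast this
    rw [hz]; exact_mod_cast this
  -- T ≤ card t / a i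
  have hTle : T ≤ (t.card : ℚ) * (1 / a i) := by
    rw [hT]
    calc ∑ j ∈ t, (1:ℚ)/a j ≤ ∑ j ∈ t, (1:ℚ)/a i := by
          refine Finset.sum_le_sum (fun j hj => ?_)
          apply one_div_le_one_div_of_le (haQ i)
          exact_mod_cast hmono (by
            simp only [ht, Finset.mem_filter] at hj
            exact Fin.le_def.mpr (Nat.le_of_not_lt hj.2))
      _ = (t.card : ℚ) * (1 / a i) := by rw [Finset.sum_const, nsmul_eq_mul]
  -- card t ≤ k - i
  have hcards : (univ.filter (fun j : Fin k => (j:ℕ) < (i:ℕ))).card = (i:ℕ) := by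
    rw [← Finset.card_range (i:ℕ)]
    refine Finset.card_nbij (fun j => (j:ℕ)) ?_ ?_ ?_
    · intro x hx; simp at hx ⊢; exact hx
    · intro x hx y hy h; exact Fin.ext h
    · intro x hx; simp at hx ⊢; exact ⟨⟨x, lt_trans hx i.isLt⟩, hx, rfl⟩
  have hcardt : t.card = k - (i:ℕ) := by
    have := Finset.card_filter_add_card_filter_not (s := (univ : Finset (Fin k)))
      (p := fun j : Fin k => (j:ℕ) < (i:ℕ))
    simp only [Finset.card_univ, Fintype.card_fin] at this
    have hcs : s.card = (i:ℕ) := hcards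
    have hik : (i:ℕ) < k := i.isLt
    rw [← ht, ← hs] at this
    omega
  -- combine
  have h1 : 1 ≤ ((k - (i:ℕ) : ℕ) : ℚ) * (1 / a i) * P := by
    calc (1:ℚ) ≤ T * P := hone
      _ ≤ (t.card : ℚ) * (1 / a i) * P := by
          exact mul_le_mul_of_nonneg_right hTle (le_of_lt hPpos)
      _ ≤ ((k - (i:ℕ) : ℕ) : ℚ) * (1 / a i) * P := by
          rw [hcardt]
  have := mul_le_mul_of_nonneg_right h1 (le_of_lt (haQ i))
  rw [one_mul] at this
  calc (a i : ℚ) ≤ ((k - (i:ℕ) : ℕ) : ℚ) * (1 / a i) * P * a i := this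
    _ = ((k - (i:ℕ) : ℕ) : ℚ) * P * ((1/a i) * a i) := by ring
    _ = ((k - (i:ℕ) : ℕ) : ℚ) * P := by
        rw [one_div_mul_cancel (ne_of_gt (haQ i)), mul_one]

theorem stmt_19 (k : ℕ) (hk : 1 ≤ k) (m n : ℕ) (hm : 0 < m) (hn : 0 < n)
    (a : Fin k → ℕ) (ha : ∀ i, 0 < a i) (hmono : Monotone a)
    (heq : (m : ℚ) / n = ∑ i, (1 : ℚ) / a i) :
    ∀ i : Fin k, a i ≤ alphaSeq k i * n ^ 2 ^ (i : ℕ) := by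
  have key : ∀ i : Fin k, a i ≤ (k - (i:ℕ)) * (n * ∏ j ∈ univ.filter (fun j : Fin k => (j:ℕ) < (i:ℕ)), a j) := by
    intro i
    have h := keylem k m n hm hn a ha hmono heq i
    exact_mod_cast h
  suffices H : ∀ N : ℕ, ∀ i : Fin k, (i:ℕ) < N → a i ≤ alphaSeq k i * n ^ 2 ^ (i:ℕ) by
    intro i; exact H ((i:ℕ)+1) i (Nat.lt_succ_self _)
  intro N
  induction N with
  | zero => intro i h; omega
  | succ N ih =>
    intro i hi
    rcases Nat.lt_succ_iff_lt_or_eq.mp hi with h | h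
    · exact ih i h
    have step2 : ∏ j ∈ univ.filter (fun j : Fin k => (j:ℕ) < (i:ℕ)), a j
        ≤ ∏ j ∈ univ.filter (fun j : Fin k => (j:ℕ) < (i:ℕ)), (alphaSeq k (j:ℕ) * n ^ 2 ^ (j:ℕ)) := by
      refine Finset.prod_le_prod' (fun j hj => ?_)
      simp only [Finset.mem_filter] at hj
      exact ih j (by omega)
    have e1 : ∏ j ∈ univ.filter (fun j : Fin k => (j:ℕ) < (i:ℕ)), (alphaSeq k (j:ℕ) * n ^ 2 ^ (j:ℕ))
        = ∏ j ∈ range (i:ℕ), (alphaSeq k j * n ^ 2 ^ j) :=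
      finprodlem k (i:ℕ) (le_of_lt i.isLt) (fun j => alphaSeq k j * n ^ 2 ^ j)
    have e2 : (k - (i:ℕ)) * (n * ∏ j ∈ range (i:ℕ), (alphaSeq k j * n ^ 2 ^ j))
        = alphaSeq k (i:ℕ) * n ^ 2 ^ (i:ℕ) := by
      rw [Finset.prod_mul_distrib, Finset.prod_pow_eq_pow_sum]
      rcases Nat.eq_zero_or_eq_succ_pred (i:ℕ) with hz | hz
      · rw [hz]; simp [alphaSeq]
      · set c := (i:ℕ) - 1 with hc
        rw [hz, alphaSeq_succ]
        have hn2 : n * n ^ (∑ j ∈ range (c+1), 2^j) = n ^ 2 ^ (c+1) := by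
          rw [← two_pow_sum (c+1), pow_add, pow_one]
        calc (k - (c+1)) * (n * ((∏ j ∈ range (c+1), alphaSeq k j) * n ^ ∑ j ∈ range (c+1), 2^j))
            = ((k - (c+1)) * ∏ j ∈ range (c+1), alphaSeq k j) * (n * n ^ ∑ j ∈ range (c+1), 2^j) := by ring
          _ = ((k - (c+1)) * ∏ j ∈ range (c+1), alphaSeq k j) * n ^ 2 ^ (c+1) := by rw [hn2]
    calc a i ≤ (k - (i:ℕ)) * (n * ∏ j ∈ univ.filter (fun j : Fin k => (j:ℕ) < (i:ℕ)), a j) := key i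
      _ ≤ (k - (i:ℕ)) * (n * ∏ j ∈ univ.filter (fun j : Fin k => (j:ℕ) < (i:ℕ)), (alphaSeq k (j:ℕ) * n ^ 2 ^ (j:ℕ))) :=
          Nat.mul_le_mul_left _ (Nat.mul_le_mul_left _ step2)
      _ = alphaSeq k (i:ℕ) * n ^ 2 ^ (i:ℕ) := by rw [e1]; exact e2
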